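/- arXiv:1605.05031 — 2 statements merged into one kernel-verified Lean document; each statement's English description precedes it below -/
import Mathlib

section
/- Fix q₀ ∈ ℝ and q ∈ H¹(0,1) with q(0)=q(1)=0. Suppose f ∈ H¹(0,1) with f(0)=f(1)=0 satisfies f' + 2(q₀+q)f − C = 0 on (0,1), where C = ∫₀¹ 2(q₀+q)f dx. Then f ≡ 0. (Hence the linearized Riccati map has trivial kernel on W¹₀.) -/
/-- Triviality of the kernel of the linearized Riccati map on `W¹₀`:
if `f(0)=f(1)=0` and `f' + 2(q₀+q)f − C = 0` on `[0,1]` with `C = ∫₀¹ 2(q₀+q)f`,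
then `f ≡ 0` on `[0,1]`. -/
theorem stmt5 (q₀ : ℝ) (q : ℝ → ℝ) (hq : ContDiff ℝ 1 q)
    (hq0 : q 0 = 0) (hq1 : q 1 = 0)
    (f : ℝ → ℝ) (hf : ContDiff ℝ 1 f) (hf0 : f 0 = 0) (hf1 : f 1 = 0)
    (C : ℝ) (hC : C = ∫ x in (0:ℝ)..1, 2 * (q₀ + q x) * f x)
    (hode : ∀ x ∈ Set.Icc (0:ℝ) 1, deriv f x + 2 * (q₀ + q x) * f x - C = 0) :
    ∀ x ∈ Set.Icc (0:ℝ) 1, f x = 0 := by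
  set Q : ℝ → ℝ := fun y => ∫ t in (0:ℝ)..y, (q₀ + q t) with hQdef
  have hcont : Continuous fun t => q₀ + q t := continuous_const.add hq.continuous
  have hQd : ∀ y : ℝ, HasDerivAt Q (q₀ + q y) y := fun y =>
    intervalIntegral.integral_hasDerivAt_right (hcont.intervalIntegrable _ _)
      (hcont.stronglyMeasurableAtFilter _ _) hcont.continuousAt
  have hQc : Continuous Q := by
    rw [continuous_iff_continuousAt]; exact fun y => (hQd y).continuousAt
  set g : ℝ → ℝ := fun y => Real.exp (2 * Q y) * f y with hgdef
  have hgd : ∀ y ∈ Set.Icc (0:ℝ) 1, HasDerivAt g (C * Real.exp (2 * Q y)) y := by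
    intro y hy
    have h1 : HasDerivAt (fun z => Real.exp (2 * Q z))
        (Real.exp (2 * Q y) * (2 * (q₀ + q y))) y :=
      (Real.hasDerivAt_exp _).comp y ((hQd y).const_mul 2)
    have h2 : HasDerivAt f (deriv f y) y := (hf.differentiable one_ne_zero y).hasDerivAt
    have h3 : HasDerivAt (fun z => Real.exp (2 * Q z) * f z)
        (Real.exp (2 * Q y) * (2 * (q₀ + q y)) * f y + Real.exp (2 * Q y) * deriv f y) y :=
      h1.mul h2
    have hode' : deriv f y = C - 2 * (q₀ + q y) * f y := by
      have := hode y hy; linarith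
    convert h3 using 1
    rw [hode']; ring
  have hcQ : Continuous fun t => Real.exp (2 * Q t) :=
    Real.continuous_exp.comp (continuous_const.mul hQc)
  have key : ∀ y ∈ Set.Icc (0:ℝ) 1, g y = C * ∫ t in (0:ℝ)..y, Real.exp (2 * Q t) := by
    intro y hy
    obtain ⟨hy0, hy1⟩ := hy
    have hint : ∀ z ∈ Set.uIcc (0:ℝ) y, HasDerivAt g (C * Real.exp (2 * Q z)) z := by
      intro z hz
      rw [Set.uIcc_of_le hy0] at hz
      exact hgd z ⟨hz.1, hz.2.trans hy1⟩
    have heq := intervalIntegral.integral_eq_sub_of_hasDerivAt hint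
      ((continuous_const.mul hcQ).intervalIntegrable _ _)
    have hg0 : g 0 = 0 := by simp [hgdef, hf0]
    rw [hg0, sub_zero, intervalIntegral.integral_const_mul] at heq
    exact heq.symm
  have hC0 : C = 0 := by
    have h1 := key 1 ⟨by norm_num, le_rfl⟩
    have hg1 : g 1 = 0 := by simp [hgdef, hf1]
    rw [hg1] at h1
    have hpos : 0 < ∫ t in (0:ℝ)..1, Real.exp (2 * Q t) := by
      apply intervalIntegral.intervalIntegral_pos_of_pos_on
        (hcQ.intervalIntegrable _ _) _ (by norm_num)
      intro t _; exact Real.exp_pos _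
    have := h1.symm
    rcases mul_eq_zero.mp this with h | h
    · exact h
    · exact absurd h (ne_of_gt hpos)
  intro x hx
  have hgx := key x hx
  rw [hC0, zero_mul] at hgx
  have := mul_eq_zero.mp hgx
  rcases this with h | h
  · exact absurd h (Real.exp_ne_zero _)
  · exact h
end

section
/- For fixed q₀ ∈ ℝ and q ∈ W¹₀, the linear operator L : W¹₀ → H₀, Lf = f' + 2(q₀+q)f − ∫₀¹ 2(q₀+q)f dx, is a bijective bounded linear operator (it is injective, and Fredholm of index zero since it is a compact perturbation of f ↦ f', hence invertible). -/
open intervalIntegral Real Set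

private lemma hasDerivAt_primitive15 {f : ℝ → ℝ} (hf : Continuous f) (x : ℝ) :
    HasDerivAt (fun u => ∫ t in (0:ℝ)..u, f t) (f x) x :=
  intervalIntegral.integral_hasDerivAt_right (hf.intervalIntegrable _ _)
    (hf.stronglyMeasurableAtFilter _ _) hf.continuousAt

theorem aux15 (a : ℝ → ℝ) (ha : Continuous a) (p : ℝ → ℝ) (hp : Continuous p)
    (hpmean : (∫ x in (0:ℝ)..1, p x) = 0) :
    ∃ f : ℝ → ℝ, ContDiff ℝ 1 f ∧ f 0 = 0 ∧ f 1 = 0 ∧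
      (∀ x ∈ Set.Icc (0:ℝ) 1,
        deriv f x + a x * f x - (∫ s in (0:ℝ)..1, a s * f s) = p x) ∧
      ∀ g : ℝ → ℝ, ContDiff ℝ 1 g → g 0 = 0 → g 1 = 0 →
        (∀ x ∈ Set.Icc (0:ℝ) 1,
          deriv g x + a x * g x - (∫ s in (0:ℝ)..1, a s * g s) = p x) →
        ∀ x ∈ Set.Icc (0:ℝ) 1, g x = f x := by
  set A : ℝ → ℝ := fun x => ∫ t in (0:ℝ)..x, a t with hA_def
  have hA : ∀ x, HasDerivAt A (a x) x := hasDerivAt_primitive15 ha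
  have hAd : Differentiable ℝ A := fun x => (hA x).differentiableAt
  have hAc : Continuous A := hAd.continuous
  set μ : ℝ → ℝ := fun x => Real.exp (A x) with hμ_def
  have hμ : ∀ x, HasDerivAt μ (Real.exp (A x) * a x) x := fun x => (hA x).exp
  have hμc : Continuous μ := Real.continuous_exp.comp hAc
  have hμpos : ∀ x, 0 < μ x := fun x => Real.exp_pos _
  set I : ℝ := ∫ t in (0:ℝ)..1, μ t with hI_def
  have hIpos : 0 < I :=
    intervalIntegral.intervalIntegral_pos_of_pos_on (hμc.intervalIntegrable 0 1)
      (fun x _ => hμpos x) one_pos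
  set c : ℝ := -(∫ t in (0:ℝ)..1, μ t * p t) / I with hc_def
  set F : ℝ → ℝ := fun x => ∫ s in (0:ℝ)..x, μ s * (p s + c) with hF_def
  have hF : ∀ x, HasDerivAt F (μ x * (p x + c)) x :=
    hasDerivAt_primitive15 (hμc.mul (hp.add continuous_const))
  set f : ℝ → ℝ := fun x => Real.exp (-A x) * F x with hf_def
  have hinv : ∀ x, Real.exp (-A x) * μ x = 1 := fun x => by
    rw [hμ_def]; simp [← Real.exp_add]
  have hf' : ∀ x, HasDerivAt f (p x + c - a x * f x) x := by
    intro x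
    have h1 : HasDerivAt (fun y => Real.exp (-A y)) (Real.exp (-A x) * (-(a x))) x :=
      ((hA x).neg).exp
    have h2 := h1.mul (hF x)
    refine h2.congr_deriv ?_
    have h3 : Real.exp (-A x) * (μ x * (p x + c)) = p x + c := by
      rw [← mul_assoc, hinv x, one_mul]
    rw [h3]
    simp only [hf_def]
    ring
  have hfd : Differentiable ℝ f := fun x => (hf' x).differentiableAt
  have hfc : Continuous f := hfd.continuous
  have hderiv : ∀ x, deriv f x = p x + c - a x * f x := fun x => (hf' x).deriv
  have hf0 : f 0 = 0 := by simp [hf_def, hF_def]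
  have hF1 : F 1 = 0 := by
    have e1 : F 1 = (∫ s in (0:ℝ)..1, μ s * p s) + c * I := by
      simp only [hF_def]
      rw [show (∫ s in (0:ℝ)..1, μ s * (p s + c))
          = ∫ s in (0:ℝ)..1, (μ s * p s + c * μ s) from
        intervalIntegral.integral_congr (fun s _ => by ring)]
      rw [intervalIntegral.integral_add (f := fun s => μ s * p s) (g := fun s => c * μ s) ((hμc.mul hp).intervalIntegrable _ _)
        ((continuous_const.mul hμc).intervalIntegrable _ _),
        intervalIntegral.integral_const_mul]
    rw [e1, hc_def]
    field_simp
    ring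
  have hf1 : f 1 = 0 := by rw [hf_def]; simp [hF1]
  have hderivc : Continuous (deriv f) := by
    have : deriv f = fun x => p x + c - a x * f x := funext hderiv
    rw [this]; exact (hp.add continuous_const).sub (ha.mul hfc)
  have hfC1 : ContDiff ℝ 1 f := contDiff_one_iff_deriv.mpr ⟨hfd, hderivc⟩
  have hintderiv : (∫ s in (0:ℝ)..1, deriv f s) = 0 := by
    rw [intervalIntegral.integral_deriv_eq_sub (fun x _ => hfd x)
      (hderivc.intervalIntegrable _ _), hf0, hf1, sub_zero]
  have hmean : (∫ s in (0:ℝ)..1, a s * f s) = c := by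
    rw [show (∫ s in (0:ℝ)..1, a s * f s)
        = ∫ s in (0:ℝ)..1, ((p s + c) - deriv f s) from
      intervalIntegral.integral_congr (fun s _ => by rw [hderiv s]; ring)]
    rw [intervalIntegral.integral_sub (f := fun s => p s + c) (g := fun s => deriv f s)
      ((hp.add continuous_const).intervalIntegrable _ _)
      (hderivc.intervalIntegrable _ _),
      intervalIntegral.integral_add (g := fun _ => c) (hp.intervalIntegrable _ _)
      (intervalIntegrable_const), hpmean, hintderiv,
      intervalIntegral.integral_const]
    simp
  refine ⟨f, hfC1, hf0, hf1, ?_, ?_⟩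
  · intro x _
    rw [hmean, hderiv x]; ring
  · intro g hg hg0 hg1 hgeq
    have hgd : Differentiable ℝ g := hg.differentiable one_ne_zero
    have hgc : Continuous g := hgd.continuous
    set cg : ℝ := ∫ s in (0:ℝ)..1, a s * g s with hcg_def
    set φ : ℝ → ℝ := fun y => μ y * (g y - f y) - (cg - c) * ∫ t in (0:ℝ)..y, μ t
      with hφ_def
    have hφ' : ∀ x ∈ Set.Icc (0:ℝ) 1, HasDerivAt φ 0 x := by
      intro x hx
      have hgx : deriv g x = p x + cg - a x * g x := by
        have := hgeq x hx; linarith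
      have h2 := ((hμ x).mul ((hgd x).hasDerivAt.sub (hf' x))).sub
        ((hasDerivAt_primitive15 hμc x).const_mul (cg - c))
      refine h2.congr_deriv ?_
      rw [hgx]
      simp only [hμ_def, Pi.sub_apply]
      ring
    have hφc : Continuous φ := by
      apply Continuous.sub
      · exact hμc.mul (hgc.sub hfc)
      · exact continuous_const.mul
          (intervalIntegral.continuous_primitive (fun a b => hμc.intervalIntegrable a b) 0)
    have hφ0 : φ 0 = 0 := by simp [hφ_def, hg0, hf0]
    have hconst : ∀ x ∈ Set.Icc (0:ℝ) 1, φ x = φ 0 :=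
      constant_of_has_deriv_right_zero hφc.continuousOn
        (fun x hx => ((hφ' x (Set.Ico_subset_Icc_self hx)).hasDerivWithinAt))
    have hcgc : cg = c := by
      have h1 := hconst 1 (by constructor <;> norm_num)
      rw [hφ0, hφ_def] at h1
      simp only at h1
      rw [hg1, hf1] at h1
      have : (cg - c) * I = 0 := by simpa [hI_def] using h1.symm
      have := mul_eq_zero.mp this
      rcases this with h | h
      · linarith
      · exact absurd h (ne_of_gt hIpos)
    intro x hx
    have h1 := hconst x hx
    rw [hφ0, hφ_def] at h1
    simp only [hcgc, sub_self, zero_mul, sub_zero] at h1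
    have := mul_eq_zero.mp h1
    rcases this with h | h
    · exact absurd h (ne_of_gt (hμpos x))
    · linarith

/-- Invertibility of the linearized Riccati operator
`L f = f' + 2(q₀+q)f − ∫₀¹ 2(q₀+q)f` from `W¹₀` onto mean-zero functions:
for every mean-zero `p` there is a solution `f` with `f(0)=f(1)=0`, unique on `[0,1]`. -/
theorem stmt15 (q₀ : ℝ) (q : ℝ → ℝ) (hq : Continuous q) (hq0 : q 0 = 0) (hq1 : q 1 = 0)
    (p : ℝ → ℝ) (hp : Continuous p) (hpmean : (∫ x in (0:ℝ)..1, p x) = 0) :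
    ∃ f : ℝ → ℝ, ContDiff ℝ 1 f ∧ f 0 = 0 ∧ f 1 = 0 ∧
      (∀ x ∈ Set.Icc (0:ℝ) 1,
        deriv f x + 2 * (q₀ + q x) * f x
          - (∫ s in (0:ℝ)..1, 2 * (q₀ + q s) * f s) = p x) ∧
      ∀ g : ℝ → ℝ, ContDiff ℝ 1 g → g 0 = 0 → g 1 = 0 →
        (∀ x ∈ Set.Icc (0:ℝ) 1,
          deriv g x + 2 * (q₀ + q x) * g x
            - (∫ s in (0:ℝ)..1, 2 * (q₀ + q s) * g s) = p x) →
        ∀ x ∈ Set.Icc (0:ℝ) 1, g x = f x := by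
  exact aux15 (fun x => 2 * (q₀ + q x))
    (continuous_const.mul (continuous_const.add hq)) p hp hpmean
end
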